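/- Let α > 0, λ < 0, and let a, c, d be real numbers with c < 0 < a, d ≥ 0, satisfying 1/α + λ² + a·c − c² = 0. Set ρ₁ = (√(4c(2c−a)+d²)+d)/2 and ρ₂ = (√(4c(2c−a)+d²)−d)/2, and define f : ℝ³ → ℂ⁴ by f(u,v,w) = ( (λ/√(λ²+1/α))·exp(i·u/(αλ)), (1/√(α(c−a)(2c−a)))·exp(−i(λu−(c−a)v)), (1/√(α·ρ₁(ρ₁+ρ₂)))·exp(−i(λu+cv+ρ₁w)), (1/√(α·ρ₂(ρ₁+ρ₂)))·exp(−i(λu+cv−ρ₂w)) ). Then at every point (u,v,w) the three partial derivatives satisfy ⟨∂f/∂u, i·f⟩_ℝ = 0, ⟨∂f/∂v, i·f⟩_ℝ = 0, and ⟨∂f/∂w, i·f⟩_ℝ = 0; that is, the contact form of S⁷ pulls back to zero along f, so f is a Legendrian immersion. -/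

import Mathlib

private lemma term_re (k : ℝ) (z : ℂ) :
    ((starRingEnd ℂ) (Complex.I * (k:ℂ) * z) * (Complex.I * z)).re = k * Complex.normSq z := by
  simp [map_mul, Complex.conj_I, Complex.mul_re, Complex.normSq_apply]
  ring

private lemma normSq_CE (C φ : ℝ) :
    Complex.normSq ((C:ℂ) * Complex.exp (Complex.I * (φ:ℂ))) = C^2 := by
  rw [Complex.normSq_mul, Complex.normSq_eq_norm_sq, Complex.normSq_eq_norm_sq, Complex.norm_exp]
  simp [sq]

private lemma normSq_CE' (C φ : ℝ) :
    Complex.normSq ((C:ℂ) * Complex.exp (-Complex.I * (φ:ℂ))) = C^2 := by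
  rw [Complex.normSq_mul, Complex.normSq_eq_norm_sq, Complex.normSq_eq_norm_sq, Complex.norm_exp]
  simp [sq]

private lemma hasDerivAt_CE (C m : ℝ) (x : ℝ → ℝ) (u : ℝ) (hx : HasDerivAt x m u) :
    HasDerivAt (fun t : ℝ => (C:ℂ) * Complex.exp (Complex.I * ((x t : ℝ):ℂ)))
      (Complex.I * ((m:ℝ):ℂ) * ((C:ℂ) * Complex.exp (Complex.I * ((x u : ℝ):ℂ)))) u := by
  have h2 := ((hx.ofReal_comp.const_mul Complex.I).cexp).const_mul (C:ℂ)
  refine h2.congr_deriv ?_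
  ring

private lemma hasDerivAt_CE' (C m : ℝ) (x : ℝ → ℝ) (u : ℝ) (hx : HasDerivAt x m u) :
    HasDerivAt (fun t : ℝ => (C:ℂ) * Complex.exp (-Complex.I * ((x t : ℝ):ℂ)))
      (Complex.I * ((-m:ℝ):ℂ) * ((C:ℂ) * Complex.exp (-Complex.I * ((x u : ℝ):ℂ)))) u := by
  have h2 := ((hx.ofReal_comp.const_mul (-Complex.I)).cexp).const_mul (C:ℂ)
  refine h2.congr_deriv ?_
  push_cast
  ring

open scoped ComplexInnerProductSpace

private lemma inner_re_four (x0 x1 x2 x3 y0 y1 y2 y3 : ℂ) :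
    (⟪((WithLp.equiv 2 (Fin 4 → ℂ)).symm ![x0,x1,x2,x3] : EuclideanSpace ℂ (Fin 4)),
      Complex.I • (WithLp.equiv 2 (Fin 4 → ℂ)).symm ![y0,y1,y2,y3]⟫).re
    = ((starRingEnd ℂ) x0 * (Complex.I * y0)).re + ((starRingEnd ℂ) x1 * (Complex.I * y1)).re
      + ((starRingEnd ℂ) x2 * (Complex.I * y2)).re + ((starRingEnd ℂ) x3 * (Complex.I * y3)).re := by
  simp [PiLp.inner_apply, Fin.sum_univ_four, PiLp.smul_apply, smul_eq_mul]
  ring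

private lemma hasDerivAt_euc (g : ℝ → Fin 4 → ℂ) (G : Fin 4 → ℂ) (u : ℝ)
    (h : ∀ i, HasDerivAt (fun t => g t i) (G i) u) :
    HasDerivAt (fun t => ((WithLp.equiv 2 (Fin 4 → ℂ)).symm (g t) : EuclideanSpace ℂ (Fin 4)))
      ((WithLp.equiv 2 (Fin 4 → ℂ)).symm G) u :=
  (((PiLp.continuousLinearEquiv 2 ℂ (fun _ : Fin 4 => ℂ)).symm.toContinuousLinearMap.restrictScalars
    ℝ).hasFDerivAt.comp_hasDerivAt u (hasDerivAt_pi.mpr h))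

set_option maxHeartbeats 1600000 in
/-- the contact form of S⁷ pulls back to zero along f, i.e. f is Legendrian. -/
theorem stmt_3 (α lam a c d : ℝ) (hα : 0 < α) (hlam : lam < 0)
    (hc : c < 0) (ha : 0 < a) (hd : 0 ≤ d)
    (hrel : 1/α + lam^2 + a*c - c^2 = 0)
    (ρ₁ ρ₂ : ℝ)
    (hρ₁ : ρ₁ = (Real.sqrt (4*c*(2*c - a) + d^2) + d)/2)
    (hρ₂ : ρ₂ = (Real.sqrt (4*c*(2*c - a) + d^2) - d)/2)
    (f : ℝ → ℝ → ℝ → EuclideanSpace ℂ (Fin 4))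
    (hf : ∀ u v w : ℝ, f u v w = (WithLp.equiv 2 (Fin 4 → ℂ)).symm
      ![((lam / Real.sqrt (lam^2 + 1/α) : ℝ) : ℂ)
          * Complex.exp (Complex.I * ((u/(α*lam) : ℝ) : ℂ)),
        ((1 / Real.sqrt (α*(c - a)*(2*c - a)) : ℝ) : ℂ)
          * Complex.exp (-Complex.I * ((lam*u - (c - a)*v : ℝ) : ℂ)),
        ((1 / Real.sqrt (α*ρ₁*(ρ₁ + ρ₂)) : ℝ) : ℂ)
          * Complex.exp (-Complex.I * ((lam*u + c*v + ρ₁*w : ℝ) : ℂ)),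
        ((1 / Real.sqrt (α*ρ₂*(ρ₁ + ρ₂)) : ℝ) : ℂ)
          * Complex.exp (-Complex.I * ((lam*u + c*v - ρ₂*w : ℝ) : ℂ))]) :
    ∀ u v w : ℝ,
      (⟪deriv (fun t => f t v w) u, Complex.I • f u v w⟫).re = 0 ∧
      (⟪deriv (fun t => f u t w) v, Complex.I • f u v w⟫).re = 0 ∧
      (⟪deriv (fun t => f u v t) w, Complex.I • f u v w⟫).re = 0 := by
  intro u v w
  have hαne : α ≠ 0 := ne_of_gt hα
  have hlamne : lam ≠ 0 := ne_of_lt hlam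
  have hcne : c ≠ 0 := ne_of_lt hc
  have h2ca : 2*c - a < 0 := by linarith
  have hca : c - a < 0 := by linarith
  have hcane : c - a ≠ 0 := ne_of_lt hca
  have h2cane : 2*c - a ≠ 0 := ne_of_lt h2ca
  have hcc : 0 < c*(c-a) := mul_pos_of_neg_of_neg hc hca
  have hc2 : 0 < c*(2*c-a) := mul_pos_of_neg_of_neg hc h2ca
  have hs2 : 0 < 4*c*(2*c-a) + d^2 := by nlinarith
  have hssq : Real.sqrt (4*c*(2*c-a) + d^2) ^ 2 = 4*c*(2*c-a) + d^2 := Real.sq_sqrt hs2.le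
  have hspos : 0 < Real.sqrt (4*c*(2*c-a) + d^2) := Real.sqrt_pos.mpr hs2
  have hsd : d < Real.sqrt (4*c*(2*c-a) + d^2) := by nlinarith
  have hρ₁pos : 0 < ρ₁ := by rw [hρ₁]; linarith
  have hρ₂pos : 0 < ρ₂ := by rw [hρ₂]; linarith
  have hρ₁ne : ρ₁ ≠ 0 := ne_of_gt hρ₁pos
  have hρ₂ne : ρ₂ ≠ 0 := ne_of_gt hρ₂pos
  have hSpos : 0 < ρ₁ + ρ₂ := by linarith
  have hSne : ρ₁ + ρ₂ ≠ 0 := ne_of_gt hSpos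
  have hprod : ρ₁ * ρ₂ = c*(2*c-a) := by rw [hρ₁, hρ₂]; nlinarith
  have hlc : lam^2 + 1/α = c*(c-a) := by linear_combination hrel
  have hC0 : (lam / Real.sqrt (lam^2 + 1/α))^2 = lam^2/(c*(c-a)) := by
    rw [hlc, div_pow, Real.sq_sqrt hcc.le]
  have hp1 : 0 < α*(c - a)*(2*c - a) := by
    nlinarith [mul_pos hα (mul_pos_of_neg_of_neg hca h2ca)]
  have hp2 : 0 < α*ρ₁*(ρ₁ + ρ₂) := by positivity
  have hp3 : 0 < α*ρ₂*(ρ₁ + ρ₂) := by positivity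
  have hC1 : (1 / Real.sqrt (α*(c - a)*(2*c - a)))^2 = 1/(α*(c - a)*(2*c - a)) := by
    rw [div_pow, one_pow, Real.sq_sqrt hp1.le]
  have hC2 : (1 / Real.sqrt (α*ρ₁*(ρ₁ + ρ₂)))^2 = 1/(α*ρ₁*(ρ₁ + ρ₂)) := by
    rw [div_pow, one_pow, Real.sq_sqrt hp2.le]
  have hC3 : (1 / Real.sqrt (α*ρ₂*(ρ₁ + ρ₂)))^2 = 1/(α*ρ₂*(ρ₁ + ρ₂)) := by
    rw [div_pow, one_pow, Real.sq_sqrt hp3.le]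
  have key : 1/(α*ρ₁*(ρ₁+ρ₂)) + 1/(α*ρ₂*(ρ₁+ρ₂)) = 1/(α*(ρ₁*ρ₂)) := by
    field_simp; ring
  set C0 : ℝ := lam / Real.sqrt (lam^2 + 1/α) with hC0def
  set C1 : ℝ := 1 / Real.sqrt (α*(c - a)*(2*c - a)) with hC1def
  set C2 : ℝ := 1 / Real.sqrt (α*ρ₁*(ρ₁ + ρ₂)) with hC2def
  set C3 : ℝ := 1 / Real.sqrt (α*ρ₂*(ρ₁ + ρ₂)) with hC3def
  set g0 : ℂ := (C0:ℂ) * Complex.exp (Complex.I * ((u/(α*lam) : ℝ) : ℂ)) with hg0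
  set g1 : ℂ := (C1:ℂ) * Complex.exp (-Complex.I * ((lam*u - (c - a)*v : ℝ) : ℂ)) with hg1
  set g2 : ℂ := (C2:ℂ) * Complex.exp (-Complex.I * ((lam*u + c*v + ρ₁*w : ℝ) : ℂ)) with hg2
  set g3 : ℂ := (C3:ℂ) * Complex.exp (-Complex.I * ((lam*u + c*v - ρ₂*w : ℝ) : ℂ)) with hg3
  refine ⟨?_, ?_, ?_⟩
  · -- u direction
    have hX : HasDerivAt (fun t => f t v w)
        ((WithLp.equiv 2 (Fin 4 → ℂ)).symm
          ![Complex.I * ((1/(α*lam) : ℝ):ℂ) * g0,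
            Complex.I * ((-lam : ℝ):ℂ) * g1,
            Complex.I * ((-lam : ℝ):ℂ) * g2,
            Complex.I * ((-lam : ℝ):ℂ) * g3]) u := by
      have hfun : (fun t => f t v w) = fun t => ((WithLp.equiv 2 (Fin 4 → ℂ)).symm
        ![(C0:ℂ) * Complex.exp (Complex.I * ((t/(α*lam) : ℝ) : ℂ)),
          (C1:ℂ) * Complex.exp (-Complex.I * ((lam*t - (c - a)*v : ℝ) : ℂ)),
          (C2:ℂ) * Complex.exp (-Complex.I * ((lam*t + c*v + ρ₁*w : ℝ) : ℂ)),
          (C3:ℂ) * Complex.exp (-Complex.I * ((lam*t + c*v - ρ₂*w : ℝ) : ℂ))] :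
          EuclideanSpace ℂ (Fin 4)) := funext fun t => hf t v w
      rw [hfun]
      refine hasDerivAt_euc _ _ u ?_
      intro i
      fin_cases i <;>
        simp only [Matrix.cons_val_zero, Matrix.cons_val_one, Matrix.head_cons,
          Matrix.cons_val_two, Matrix.tail_cons, Matrix.cons_val_three, Fin.isValue]
      · exact hasDerivAt_CE C0 (1/(α*lam)) (fun t => t/(α*lam)) u
          ((hasDerivAt_id u).div_const (α*lam))
      · exact hasDerivAt_CE' C1 lam (fun t => lam*t - (c - a)*v) u
          (by simpa using ((hasDerivAt_id u).const_mul lam).sub_const ((c-a)*v))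
      · exact hasDerivAt_CE' C2 lam (fun t => lam*t + c*v + ρ₁*w) u
          (by simpa using (((hasDerivAt_id u).const_mul lam).add_const (c*v)).add_const (ρ₁*w))
      · exact hasDerivAt_CE' C3 lam (fun t => lam*t + c*v - ρ₂*w) u
          (by simpa using (((hasDerivAt_id u).const_mul lam).add_const (c*v)).sub_const (ρ₂*w))
    rw [hX.deriv, hf u v w]
    rw [show ((WithLp.equiv 2 (Fin 4 → ℂ)).symm
      ![(C0:ℂ) * Complex.exp (Complex.I * ((u/(α*lam) : ℝ) : ℂ)),
        (C1:ℂ) * Complex.exp (-Complex.I * ((lam*u - (c - a)*v : ℝ) : ℂ)),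
        (C2:ℂ) * Complex.exp (-Complex.I * ((lam*u + c*v + ρ₁*w : ℝ) : ℂ)),
        (C3:ℂ) * Complex.exp (-Complex.I * ((lam*u + c*v - ρ₂*w : ℝ) : ℂ))] :
        EuclideanSpace ℂ (Fin 4)) = (WithLp.equiv 2 (Fin 4 → ℂ)).symm ![g0,g1,g2,g3] from rfl]
    rw [inner_re_four, term_re, term_re, term_re, term_re,
      hg0, hg1, hg2, hg3, normSq_CE, normSq_CE', normSq_CE', normSq_CE',
      hC0def, hC1def, hC2def, hC3def, hC0, hC1, hC2, hC3]
    calc 1/(α*lam) * (lam^2/(c*(c-a))) + -lam * (1/(α*(c - a)*(2*c - a)))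
        + -lam * (1/(α*ρ₁*(ρ₁ + ρ₂))) + -lam * (1/(α*ρ₂*(ρ₁ + ρ₂)))
        = 1/(α*lam) * (lam^2/(c*(c-a))) + -lam * (1/(α*(c - a)*(2*c - a)))
          + -lam * (1/(α*ρ₁*(ρ₁ + ρ₂)) + 1/(α*ρ₂*(ρ₁ + ρ₂))) := by ring
      _ = 1/(α*lam) * (lam^2/(c*(c-a))) + -lam * (1/(α*(c - a)*(2*c - a)))
          + -lam * (1/(α*(c*(2*c-a)))) := by rw [key, hprod]
      _ = 0 := by
        field_simp
        rw [mul_zero]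
        have h2' : c*2 - a ≠ 0 := by contrapose! h2cane; linarith
        field_simp
        ring
  · -- v direction
    have hX : HasDerivAt (fun t => f u t w)
        ((WithLp.equiv 2 (Fin 4 → ℂ)).symm
          ![0,
            Complex.I * ((-(-(c - a)) : ℝ):ℂ) * g1,
            Complex.I * ((-c : ℝ):ℂ) * g2,
            Complex.I * ((-c : ℝ):ℂ) * g3]) v := by
      have hfun : (fun t => f u t w) = fun t => ((WithLp.equiv 2 (Fin 4 → ℂ)).symm
        ![(C0:ℂ) * Complex.exp (Complex.I * ((u/(α*lam) : ℝ) : ℂ)),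
          (C1:ℂ) * Complex.exp (-Complex.I * ((lam*u - (c - a)*t : ℝ) : ℂ)),
          (C2:ℂ) * Complex.exp (-Complex.I * ((lam*u + c*t + ρ₁*w : ℝ) : ℂ)),
          (C3:ℂ) * Complex.exp (-Complex.I * ((lam*u + c*t - ρ₂*w : ℝ) : ℂ))] :
          EuclideanSpace ℂ (Fin 4)) := funext fun t => hf u t w
      rw [hfun]
      refine hasDerivAt_euc _ _ v ?_
      intro i
      fin_cases i <;>
        simp only [Matrix.cons_val_zero, Matrix.cons_val_one, Matrix.head_cons,
          Matrix.cons_val_two, Matrix.tail_cons, Matrix.cons_val_three, Fin.isValue]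
      · exact hasDerivAt_const v _
      · exact hasDerivAt_CE' C1 (-(c - a)) (fun t => lam*u - (c - a)*t) v
          (by simpa using ((hasDerivAt_id v).const_mul (c-a)).const_sub (lam*u))
      · exact hasDerivAt_CE' C2 c (fun t => lam*u + c*t + ρ₁*w) v
          (by simpa using (((hasDerivAt_id v).const_mul c).const_add (lam*u)).add_const (ρ₁*w))
      · exact hasDerivAt_CE' C3 c (fun t => lam*u + c*t - ρ₂*w) v
          (by simpa using (((hasDerivAt_id v).const_mul c).const_add (lam*u)).sub_const (ρ₂*w))
    rw [hX.deriv, hf u v w]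
    rw [show ((WithLp.equiv 2 (Fin 4 → ℂ)).symm
      ![(C0:ℂ) * Complex.exp (Complex.I * ((u/(α*lam) : ℝ) : ℂ)),
        (C1:ℂ) * Complex.exp (-Complex.I * ((lam*u - (c - a)*v : ℝ) : ℂ)),
        (C2:ℂ) * Complex.exp (-Complex.I * ((lam*u + c*v + ρ₁*w : ℝ) : ℂ)),
        (C3:ℂ) * Complex.exp (-Complex.I * ((lam*u + c*v - ρ₂*w : ℝ) : ℂ))] :
        EuclideanSpace ℂ (Fin 4)) = (WithLp.equiv 2 (Fin 4 → ℂ)).symm ![g0,g1,g2,g3] from rfl]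
    rw [inner_re_four]
    simp only [map_zero, zero_mul, Complex.zero_re, zero_add]
    rw [term_re, term_re, term_re,
      hg1, hg2, hg3, normSq_CE', normSq_CE', normSq_CE',
      hC1def, hC2def, hC3def, hC1, hC2, hC3]
    calc -(-(c - a)) * (1/(α*(c - a)*(2*c - a)))
        + -c * (1/(α*ρ₁*(ρ₁ + ρ₂))) + -c * (1/(α*ρ₂*(ρ₁ + ρ₂)))
        = (c - a) * (1/(α*(c - a)*(2*c - a)))
          + -c * (1/(α*ρ₁*(ρ₁ + ρ₂)) + 1/(α*ρ₂*(ρ₁ + ρ₂))) := by ring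
      _ = (c - a) * (1/(α*(c - a)*(2*c - a))) + -c * (1/(α*(c*(2*c-a)))) := by rw [key, hprod]
      _ = 0 := by field_simp; ring
  · -- w direction
    have hX : HasDerivAt (fun t => f u v t)
        ((WithLp.equiv 2 (Fin 4 → ℂ)).symm
          ![0, 0,
            Complex.I * ((-ρ₁ : ℝ):ℂ) * g2,
            Complex.I * ((-(-ρ₂) : ℝ):ℂ) * g3]) w := by
      have hfun : (fun t => f u v t) = fun t => ((WithLp.equiv 2 (Fin 4 → ℂ)).symm
        ![(C0:ℂ) * Complex.exp (Complex.I * ((u/(α*lam) : ℝ) : ℂ)),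
          (C1:ℂ) * Complex.exp (-Complex.I * ((lam*u - (c - a)*v : ℝ) : ℂ)),
          (C2:ℂ) * Complex.exp (-Complex.I * ((lam*u + c*v + ρ₁*t : ℝ) : ℂ)),
          (C3:ℂ) * Complex.exp (-Complex.I * ((lam*u + c*v - ρ₂*t : ℝ) : ℂ))] :
          EuclideanSpace ℂ (Fin 4)) := funext fun t => hf u v t
      rw [hfun]
      refine hasDerivAt_euc _ _ w ?_
      intro i
      fin_cases i <;>
        simp only [Matrix.cons_val_zero, Matrix.cons_val_one, Matrix.head_cons,
          Matrix.cons_val_two, Matrix.tail_cons, Matrix.cons_val_three, Fin.isValue]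
      · exact hasDerivAt_const w _
      · exact hasDerivAt_const w _
      · exact hasDerivAt_CE' C2 ρ₁ (fun t => lam*u + c*v + ρ₁*t) w
          (by simpa using ((hasDerivAt_id w).const_mul ρ₁).const_add (lam*u + c*v))
      · exact hasDerivAt_CE' C3 (-ρ₂) (fun t => lam*u + c*v - ρ₂*t) w
          (by simpa using ((hasDerivAt_id w).const_mul ρ₂).const_sub (lam*u + c*v))
    rw [hX.deriv, hf u v w]
    rw [show ((WithLp.equiv 2 (Fin 4 → ℂ)).symm
      ![(C0:ℂ) * Complex.exp (Complex.I * ((u/(α*lam) : ℝ) : ℂ)),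
        (C1:ℂ) * Complex.exp (-Complex.I * ((lam*u - (c - a)*v : ℝ) : ℂ)),
        (C2:ℂ) * Complex.exp (-Complex.I * ((lam*u + c*v + ρ₁*w : ℝ) : ℂ)),
        (C3:ℂ) * Complex.exp (-Complex.I * ((lam*u + c*v - ρ₂*w : ℝ) : ℂ))] :
        EuclideanSpace ℂ (Fin 4)) = (WithLp.equiv 2 (Fin 4 → ℂ)).symm ![g0,g1,g2,g3] from rfl]
    rw [inner_re_four]
    simp only [map_zero, zero_mul, Complex.zero_re, zero_add]
    rw [term_re, term_re,
      hg2, hg3, normSq_CE', normSq_CE',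
      hC2def, hC3def, hC2, hC3]
    field_simp
    ring
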